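/- Let Π ⊆ E be nonempty compact convex, let V : E → E be continuously differentiable on an open set containing Π, and let π* ∈ Π satisfy: (i) first-order stationarity, ⟨V(π*), π − π*⟩ ≤ 0 for all π ∈ Π; and (ii) the second-order sufficiency condition ⟨z, DV(π*)·z⟩ < 0 for every nonzero z in the tangent cone T_Π(π*), where DV(π*) is the Fréchet derivative of V at π*. Then there exist μ > 0 and an open neighborhood 𝒰 of π* in E such that ⟨V(π), π − π*⟩ ≤ −μ·‖π − π*‖² for all π ∈ Π ∩ 𝒰. -/

import Mathlib

open scoped RealInnerProductSpace

/-- Near a second-order stationary point, the drift is quadratically negative: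
if `πstar` is first-order stationary and the Jacobian of `V` at `πstar` is negative
definite along the tangent cone of `K` at `πstar`, then there exist `μ > 0` and an open
neighborhood `𝒰` of `πstar` on which `⟪V π, π - πstar⟫ ≤ -μ ‖π - πstar‖²`. -/
theorem sos_quadratic_drift
    {E : Type*} [NormedAddCommGroup E] [InnerProductSpace ℝ E] [FiniteDimensional ℝ E]
    (K : Set E) (hK_ne : K.Nonempty) (hK_cpt : IsCompact K) (hK_conv : Convex ℝ K)
    (V : E → E) (πstar : E) (hπstar : πstar ∈ K)
    (O : Set E) (hO : IsOpen O) (hKO : K ⊆ O) (hV : ContDiffOn ℝ 1 V O)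
    (hstat : ∀ x ∈ K, ⟪V πstar, x - πstar⟫ ≤ 0)
    (hsos : ∀ z ∈ closure {z : E | ∃ l : ℝ, 0 ≤ l ∧ ∃ q ∈ K, z = l • (q - πstar)},
      z ≠ 0 → ⟪z, fderiv ℝ V πstar z⟫ < 0) :
    ∃ μ : ℝ, 0 < μ ∧ ∃ 𝒰 : Set E, IsOpen 𝒰 ∧ πstar ∈ 𝒰 ∧
      ∀ x ∈ K ∩ 𝒰, ⟪V x, x - πstar⟫ ≤ -μ * ‖x - πstar‖ ^ 2 := by
  set A := fderiv ℝ V πstar with hA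
  set C : Set E := {z : E | ∃ l : ℝ, 0 ≤ l ∧ ∃ q ∈ K, z = l • (q - πstar)} with hCdef
  have hcone : ∀ c : ℝ, 0 ≤ c → ∀ z ∈ closure C, c • z ∈ closure C := by
    intro c hc z hz
    refine map_mem_closure (continuous_const_smul c) hz ?_
    rintro w ⟨l, hl, q, hq, rfl⟩
    exact ⟨c * l, mul_nonneg hc hl, q, hq, (mul_smul c l _).symm⟩
  have hdiff : DifferentiableAt ℝ V πstar :=
    (hV.contDiffAt (hO.mem_nhds (hKO hπstar))).differentiableAt one_ne_zero
  have hfd : HasFDerivAt V A πstar := hdiff.hasFDerivAt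
  obtain ⟨μ, hμ, hquad⟩ : ∃ μ : ℝ, 0 < μ ∧
      ∀ x ∈ K, ⟪A (x - πstar), x - πstar⟫ ≤ -(2 * μ) * ‖x - πstar‖ ^ 2 := by
    by_cases hS : (closure C ∩ Metric.sphere (0 : E) 1).Nonempty
    · have hScpt : IsCompact (closure C ∩ Metric.sphere (0 : E) 1) :=
        (isCompact_sphere 0 1).inter_left isClosed_closure
      have hfc : Continuous fun z : E => ⟪z, A z⟫ := continuous_id.inner A.continuous
      obtain ⟨z0, hz0, hmax⟩ := hScpt.exists_isMaxOn hS hfc.continuousOn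
      have hz0ne : z0 ≠ 0 := by
        intro h
        have := hz0.2
        simp [h] at this
      have hm : ⟪z0, A z0⟫ < 0 := hsos z0 hz0.1 hz0ne
      refine ⟨-⟪z0, A z0⟫ / 2, by linarith, ?_⟩
      intro x hx
      have hz : x - πstar ∈ closure C :=
        subset_closure ⟨1, zero_le_one, x, hx, (one_smul ℝ _).symm⟩
      by_cases hxe : x = πstar
      · simp [hxe]
      · have hne : x - πstar ≠ 0 := sub_ne_zero.mpr hxe
        have hnorm : (0:ℝ) < ‖x - πstar‖ := norm_pos_iff.mpr hne
        set w := ‖x - πstar‖⁻¹ • (x - πstar) with hw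
        have hwT : w ∈ closure C := hcone _ (by positivity) _ hz
        have hwS : w ∈ Metric.sphere (0 : E) 1 := by
          simp [hw, norm_smul, abs_of_pos (inv_pos.mpr hnorm),
            inv_mul_cancel₀ hnorm.ne']
        have hle : ⟪w, A w⟫ ≤ ⟪z0, A z0⟫ := hmax ⟨hwT, hwS⟩
        have hfw : ⟪w, A w⟫ = (‖x - πstar‖⁻¹) ^ 2 * ⟪x - πstar, A (x - πstar)⟫ := by
          simp only [hw, map_smul, real_inner_smul_left, real_inner_smul_right]
          ring
        have hcomm : ⟪A (x - πstar), x - πstar⟫ = ⟪x - πstar, A (x - πstar)⟫ :=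
          real_inner_comm _ _
        rw [hfw] at hle
        rw [hcomm]
        have h2 : (‖x - πstar‖⁻¹) ^ 2 = (‖x - πstar‖ ^ 2)⁻¹ := by
          rw [inv_pow]
        have hn2 : (0:ℝ) < ‖x - πstar‖ ^ 2 := by positivity
        have hinv : ‖x - πstar‖ ^ 2 * ((‖x - πstar‖⁻¹) ^ 2 * ⟪x - πstar, A (x - πstar)⟫)
            = ⟪x - πstar, A (x - πstar)⟫ := by
          field_simp
        have hkey := mul_le_mul_of_nonneg_left hle hn2.le
        rw [hinv] at hkey
        nlinarith [hkey]
    · -- the cone meets the sphere nowhere, so K = {πstar}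
      refine ⟨1, one_pos, ?_⟩
      intro x hx
      by_cases hxe : x = πstar
      · simp [hxe]
      · exfalso
        have hne : x - πstar ≠ 0 := sub_ne_zero.mpr hxe
        have hnorm : (0:ℝ) < ‖x - πstar‖ := norm_pos_iff.mpr hne
        have hz : x - πstar ∈ closure C :=
          subset_closure ⟨1, zero_le_one, x, hx, (one_smul ℝ _).symm⟩
        refine hS ⟨‖x - πstar‖⁻¹ • (x - πstar), hcone _ (by positivity) _ hz, ?_⟩
        simp [norm_smul, abs_of_pos (inv_pos.mpr hnorm), inv_mul_cancel₀ hnorm.ne']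
  -- neighborhood where the remainder is small
  have hlo : ∀ᶠ x in nhds πstar, ‖V x - V πstar - A (x - πstar)‖ ≤ μ * ‖x - πstar‖ :=
    hfd.isLittleO.def hμ
  obtain ⟨𝒰, h𝒰, h𝒰open, h𝒰mem⟩ := eventually_nhds_iff.mp hlo
  refine ⟨μ, hμ, 𝒰, h𝒰open, h𝒰mem, ?_⟩
  rintro x ⟨hxK, hxU⟩
  have herr : ‖V x - V πstar - A (x - πstar)‖ ≤ μ * ‖x - πstar‖ := h𝒰 x hxU
  have hsplit : ⟪V x, x - πstar⟫ = ⟪V πstar, x - πstar⟫ + ⟪A (x - πstar), x - πstar⟫ +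
      ⟪V x - V πstar - A (x - πstar), x - πstar⟫ := by
    simp [inner_sub_left]
  have hcs : ⟪V x - V πstar - A (x - πstar), x - πstar⟫ ≤
      ‖V x - V πstar - A (x - πstar)‖ * ‖x - πstar‖ := real_inner_le_norm _ _
  have hcs2 : ⟪V x - V πstar - A (x - πstar), x - πstar⟫ ≤ μ * ‖x - πstar‖ ^ 2 := by
    calc ⟪V x - V πstar - A (x - πstar), x - πstar⟫
        ≤ ‖V x - V πstar - A (x - πstar)‖ * ‖x - πstar‖ := hcs
      _ ≤ (μ * ‖x - πstar‖) * ‖x - πstar‖ :=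
          mul_le_mul_of_nonneg_right herr (norm_nonneg _)
      _ = μ * ‖x - πstar‖ ^ 2 := by ring
  have h1 := hstat x hxK
  have h2 := hquad x hxK
  rw [hsplit]
  nlinarith [h1, h2, hcs2]
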